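/- Let (p_t, P_T) be a drift process and let ℬ₀ ⊆ ℬ be a generating set of the σ-algebra ℬ (i.e. σ(ℬ₀) = ℬ) that is stable under finite intersections. Then (p_t, P_T) has proper drift if and only if there exists a set A ∈ ℬ₀ such that A and its complement A^C are alternating sets (in particular P_T(A) ∈ (0,1) and p_A ≠ p_{A^C}). -/

import Mathlib

open MeasureTheory ProbabilityTheory

/-- A drift process has *no drift* if `p s = p t` for `(P_T × P_T)`-a.e. pair `(s, t)`. -/
def HasNoDrift {𝔗 𝔛 : Type*} [MeasurableSpace 𝔗] [MeasurableSpace 𝔛]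
    (p : Kernel 𝔗 𝔛) (PT : Measure 𝔗) : Prop :=
  ∀ᵐ st ∂(PT.prod PT), p st.1 = p st.2

/-- A drift process `(p_t, P_T)` has *no proper drift* if there exists a drift process
`(p'_t, P'_T)` with the same joint measure `p ⊗ P_T = p' ⊗ P'_T` that has no drift. -/
def HasNoProperDrift {𝔗 𝔛 : Type*} [MeasurableSpace 𝔗] [MeasurableSpace 𝔛]
    (p : Kernel 𝔗 𝔛) (PT : Measure 𝔗) : Prop :=
  ∃ (p' : Kernel 𝔗 𝔛) (PT' : Measure 𝔗), IsMarkovKernel p' ∧ IsProbabilityMeasure PT' ∧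
    PT' ⊗ₘ p' = PT ⊗ₘ p ∧ HasNoDrift p' PT'

/-- The `𝔗`-invariant model of a drift process over a non-null set `A`:
the probability measure `p_A(D) = P_T(A)⁻¹ ∫_A p_t(D) dP_T(t)`. -/
noncomputable def invariantModel {𝔗 𝔛 : Type*} [MeasurableSpace 𝔗] [MeasurableSpace 𝔛]
    (p : Kernel 𝔗 𝔛) (PT : Measure 𝔗) (A : Set 𝔗) : Measure 𝔛 :=
  (PT A)⁻¹ • (PT.restrict A).bind (fun t => p t)

lemma invariantModel_apply {𝔗 𝔛 : Type*} [MeasurableSpace 𝔗] [MeasurableSpace 𝔛]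
    (p : Kernel 𝔗 𝔛) (PT : Measure 𝔗) (A : Set 𝔗) {D : Set 𝔛} (hD : MeasurableSet D) :
    invariantModel p PT A D = (PT A)⁻¹ * ∫⁻ t in A, p t D ∂PT := by
  rw [invariantModel, Measure.smul_apply, smul_eq_mul,
    Measure.bind_apply hD p.measurable.aemeasurable]

/-- Let `ℬ₀` be a generating set of the σ-algebra on `𝔗` that is stable under finite
intersections. A drift process has proper drift iff there exists `A ∈ ℬ₀` such that `A`
and `Aᶜ` are alternating sets, i.e. `P_T(A) ∈ (0,1)` and `p_A ≠ p_{Aᶜ}`. -/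
theorem properDrift_iff_alternating_in_generator {𝔗 𝔛 : Type*} [m𝔗 : MeasurableSpace 𝔗]
    [MeasurableSpace 𝔛] (p : Kernel 𝔗 𝔛) [IsMarkovKernel p]
    (PT : Measure 𝔗) [IsProbabilityMeasure PT]
    (ℬ₀ : Set (Set 𝔗)) (hgen : MeasurableSpace.generateFrom ℬ₀ = m𝔗)
    (hinter : ∀ A ∈ ℬ₀, ∀ B ∈ ℬ₀, A ∩ B ∈ ℬ₀) :
    ¬ HasNoProperDrift p PT ↔
      ∃ A ∈ ℬ₀, 0 < PT A ∧ PT A < 1 ∧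
        invariantModel p PT A ≠ invariantModel p PT Aᶜ := by
  set ν : Measure 𝔛 := PT.bind (fun t => p t) with hν
  have hν_apply : ∀ {D : Set 𝔛}, MeasurableSet D → ν D = ∫⁻ t, p t D ∂PT := fun hD =>
    Measure.bind_apply hD p.measurable.aemeasurable
  haveI hνprob : IsProbabilityMeasure ν := by
    constructor
    rw [hν_apply MeasurableSet.univ]
    simp
  constructor
  · -- proper drift → alternating generator set
    intro h
    by_contra hno
    push_neg at hno
    apply h
    -- key: ∫⁻ t in A, p t D = PT A * ν D for all measurable A, D
    have key : ∀ {D : Set 𝔛}, MeasurableSet D → ∀ {A : Set 𝔗}, MeasurableSet A →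
        ∫⁻ t in A, p t D ∂PT = ν D * PT A := by
      intro D hD
      have hmeas : Measurable fun t => p t D := p.measurable_coe hD
      haveI hfin : IsFiniteMeasure (PT.withDensity fun t => p t D) := by
        refine isFiniteMeasure_withDensity ?_
        have : ∫⁻ t, p t D ∂PT ≤ ∫⁻ _, 1 ∂PT := lintegral_mono fun t => prob_le_one
        simp only [lintegral_one, measure_univ] at this
        exact (this.trans_lt ENNReal.one_lt_top).ne
      have hext : PT.withDensity (fun t => p t D) = ν D • PT := by
        refine ext_of_generate_finite ℬ₀ hgen.symm
          (fun s hs t ht _ => hinter s hs t ht) ?_ ?_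
        · intro A hA
          have hmA : MeasurableSet A := hgen ▸ MeasurableSpace.measurableSet_generateFrom hA
          rw [withDensity_apply _ hmA, Measure.smul_apply, smul_eq_mul]
          rcases eq_or_ne (PT A) 0 with h0 | h0
          · rw [setLIntegral_measure_zero _ _ h0, h0, mul_zero]
          rcases eq_or_ne (PT A) 1 with h1 | h1
          · have hc : PT Aᶜ = 0 := by
              rw [measure_compl hmA (measure_ne_top _ _), h1, measure_univ, tsub_self]
            have hae : ∀ᵐ x ∂PT, x ∈ A := by rw [ae_iff]; exact hc
            rw [Measure.restrict_eq_self_of_ae_mem hae, ← hν_apply hD, h1, mul_one]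
          · -- 0 < PT A < 1, use the non-alternating hypothesis
            have hApos : 0 < PT A := pos_iff_ne_zero.mpr h0
            have hAlt1 : PT A < 1 := lt_of_le_of_ne prob_le_one h1
            have heqAB := hno A hA hApos hAlt1
            set a := PT A with ha
            set b := PT Aᶜ with hb
            set x := ∫⁻ t in A, p t D ∂PT with hx
            set y := ∫⁻ t in Aᶜ, p t D ∂PT with hy
            have ha0 : a ≠ 0 := h0
            have haT : a ≠ ⊤ := measure_ne_top _ _
            have hbT : b ≠ ⊤ := measure_ne_top _ _
            have hb0 : b ≠ 0 := by
              rw [hb, measure_compl hmA (measure_ne_top _ _), measure_univ, ← ha]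
              simpa [tsub_eq_zero_iff_le] using hAlt1.not_ge
            have hab : a + b = 1 := by
              rw [ha, hb, measure_add_measure_compl hmA, measure_univ]
            have heqD : a⁻¹ * x = b⁻¹ * y := by
              have := congrArg (fun m : Measure 𝔛 => m D) heqAB
              simpa [invariantModel_apply p PT A hD, invariantModel_apply p PT Aᶜ hD,
                ← ha, ← hb, ← hx, ← hy] using this
            have hxeq : x = a * (b⁻¹ * y) := by
              rw [← heqD, ← mul_assoc, ENNReal.mul_inv_cancel ha0 haT, one_mul]
            have hxb : x * b = a * y := by
              rw [hxeq, mul_assoc, mul_assoc, mul_comm y b, ← mul_assoc b⁻¹ b y,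
                ENNReal.inv_mul_cancel hb0 hbT, one_mul]
            have hsum : x + y = ν D := by
              rw [hν_apply hD, hx, hy]
              exact lintegral_add_compl _ hmA
            calc x = x * 1 := (mul_one x).symm
              _ = x * (a + b) := by rw [hab]
              _ = x * a + x * b := mul_add x a b
              _ = x * a + y * a := by rw [hxb, mul_comm a y]
              _ = (x + y) * a := (add_mul x y a).symm
              _ = ν D * a := by rw [hsum]
        · rw [withDensity_apply _ MeasurableSet.univ, Measure.smul_apply, smul_eq_mul,
            Measure.restrict_univ, ← hν_apply hD, measure_univ, mul_one]
      intro A hmA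
      rw [← withDensity_apply _ hmA, hext, Measure.smul_apply, smul_eq_mul]
    refine ⟨Kernel.const 𝔗 ν, PT, inferInstance, inferInstance, ?_,
      Filter.Eventually.of_forall fun _ => rfl⟩
    rw [Measure.compProd_const]
    exact Measure.prod_eq fun s t hs ht => by
      rw [Measure.compProd_apply_prod hs ht, key ht hs, mul_comm]
  · -- alternating generator set → proper drift
    rintro ⟨A, hA, hApos, hAlt1, hne⟩ ⟨p', PT', hM, hP, heq, hnd⟩
    have hmA : MeasurableSet A := hgen ▸ MeasurableSpace.measurableSet_generateFrom hA
    haveI := hM; haveI := hP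
    have h2 := Measure.ae_ae_of_ae_prod hnd
    haveI : (ae PT').NeBot := ae_neBot.mpr hP.ne_zero
    obtain ⟨s₀, hs₀⟩ := h2.exists
    set μ := p' s₀ with hμ
    haveI : IsProbabilityMeasure μ := hM.isProbabilityMeasure s₀
    have hconst : PT' ⊗ₘ p' = PT'.prod μ := by
      rw [← Measure.compProd_const]
      exact Measure.compProd_congr (hs₀.mono fun t ht => ht.symm)
    have hjoint : PT ⊗ₘ p = PT'.prod μ := by rw [← heq, hconst]
    have hPT : PT' = PT := by
      have h3 := congrArg Measure.fst hjoint
      rw [Measure.fst_compProd, Measure.fst_prod] at h3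
      exact h3.symm
    rw [hPT] at hjoint
    have hinv : ∀ {B : Set 𝔗}, MeasurableSet B → PT B ≠ 0 → invariantModel p PT B = μ := by
      intro B hmB hB0
      ext D hD
      rw [invariantModel_apply p PT B hD, ← Measure.compProd_apply_prod hmB hD, hjoint,
        Measure.prod_prod, ← mul_assoc, ENNReal.inv_mul_cancel hB0 (measure_ne_top _ _), one_mul]
    apply hne
    have hc0 : PT Aᶜ ≠ 0 := by
      rw [measure_compl hmA (measure_ne_top _ _), measure_univ]
      simpa [tsub_eq_zero_iff_le] using hAlt1.not_ge
    rw [hinv hmA hApos.ne', hinv hmA.compl hc0]
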